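/- (Extinction of cooperation.) Let y : ℝ^N → ℝ^N be continuously differentiable with y(0) = 0 and Jacobian J at 0, and for each i let g_i : [0,1] → ℝ be continuous with g_i(x) > 0 for all x ∈ [0,1]. Consider the dynamics ṗ_i = p_i g_i(p_i) y_i(p) on the cube [0,1]^N. If x^T diag(g_1(0),…,g_N(0)) J x < 0 for every nonzero x ∈ ℝ^N, then the equilibrium p* = 0 is asymptotically stable relative to [0,1]^N: for every neighborhood U of 0 there is a neighborhood V of 0 such that every differentiable solution p : [0,∞) → [0,1]^N of the dynamics with p(0) ∈ V remains in U for all t ≥ 0 and converges to 0 as t → ∞. -/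

import Mathlib

open Filter Topology

lemma negdef_bound {N : ℕ} (hN : 0 < N) (Q : (Fin N → ℝ) → ℝ)
    (hQc : Continuous Q) (hhom : ∀ (c : ℝ) x, Q (c • x) = c ^ 2 * Q x)
    (hQneg : ∀ x, x ≠ 0 → Q x < 0) :
    ∃ c > 0, ∀ x, Q x ≤ -c * ‖x‖ ^ 2 := by
  have : Nonempty (Fin N) := ⟨⟨0, hN⟩⟩
  have hsne : (Metric.sphere (0 : Fin N → ℝ) 1).Nonempty := by
    refine ⟨fun _ => 1, ?_⟩
    have : ‖(fun (_ : Fin N) => (1:ℝ))‖ = ‖(1:ℝ)‖ := pi_norm_const (1:ℝ)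
    simpa using this
  obtain ⟨x₀, hx₀s, hx₀max⟩ := (isCompact_sphere (0 : Fin N → ℝ) 1).exists_isMaxOn hsne
    hQc.continuousOn
  have hx₀ : ‖x₀‖ = 1 := by simpa using hx₀s
  have hx₀ne : x₀ ≠ 0 := by
    intro h; rw [h] at hx₀; simp at hx₀
  refine ⟨-Q x₀, by linarith [hQneg x₀ hx₀ne], fun x => ?_⟩
  rcases eq_or_ne x 0 with rfl | hx
  · have : Q 0 = 0 := by
      have := hhom 0 0; simpa using this
    simp [this]
  · have hxn : ‖x‖ ≠ 0 := norm_ne_zero_iff.mpr hx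
    set u := ‖x‖⁻¹ • x with hu
    have hus : u ∈ Metric.sphere (0 : Fin N → ℝ) 1 := by
      simp [hu, norm_smul, abs_of_nonneg (inv_nonneg.mpr (norm_nonneg x)),
        inv_mul_cancel₀ hxn]
    have hxu : x = ‖x‖ • u := by
      rw [hu, smul_smul, mul_inv_cancel₀ hxn, one_smul]
    have := hx₀max hus
    calc Q x = ‖x‖ ^ 2 * Q u := by conv_lhs => rw [hxu, hhom]
    _ ≤ ‖x‖ ^ 2 * Q x₀ := by
        apply mul_le_mul_of_nonneg_left this (by positivity)
    _ = -(-Q x₀) * ‖x‖ ^ 2 := by ring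


lemma main_estimate {N : ℕ} (hN : 0 < N) (y : (Fin N → ℝ) → Fin N → ℝ)
    (hy : ContDiff ℝ 1 y) (hy0 : y 0 = 0)
    (g : Fin N → ℝ → ℝ)
    (hgcont : ∀ i, ContinuousOn (g i) (Set.Icc (0:ℝ) 1))
    (hgpos : ∀ i, ∀ x ∈ Set.Icc (0:ℝ) 1, 0 < g i x)
    {c₀ : ℝ} (hc₀ : 0 < c₀)
    (hQ : ∀ x : Fin N → ℝ,
      (∑ i, g i 0 * x i * fderiv ℝ y 0 x i) ≤ -c₀ * ‖x‖^2) :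
    ∃ δ > 0, ∀ x : Fin N → ℝ, x ∈ Set.Icc (0 : Fin N → ℝ) 1 → ‖x‖ ≤ δ →
      (∑ i, x i * g i (x i) * y x i) ≤ -(c₀/2) * ‖x‖^2 := by
  have : Nonempty (Fin N) := ⟨⟨0, hN⟩⟩
  set J := fderiv ℝ y 0 with hJdef
  have hNpos : (0:ℝ) < N := by exact_mod_cast hN
  -- little-o property
  have hder : HasFDerivAt y J 0 :=
    (hy.differentiable one_ne_zero).differentiableAt.hasFDerivAt
  have hlo : (fun x => y x - J x) =o[𝓝 (0 : Fin N → ℝ)] fun x => x := by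
    have := hder.isLittleO
    simpa [hy0] using this
  set GS : ℝ := (∑ i, g i 0) + 1 with hGS
  have hg0nonneg : ∀ i, 0 ≤ g i 0 := fun i =>
    (hgpos i 0 ⟨le_refl 0, zero_le_one⟩).le
  have hGSpos : 0 < GS := by
    have : 0 ≤ ∑ i, g i 0 := Finset.sum_nonneg fun i _ => hg0nonneg i
    positivity
  have hg0le : ∀ i, g i 0 ≤ GS := by
    intro i
    have : g i 0 ≤ ∑ j, g j 0 :=
      Finset.single_le_sum (fun j _ => hg0nonneg j) (Finset.mem_univ i)
    linarith
  set ε₁ : ℝ := c₀ / (4 * N * GS) with hε₁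
  have hε₁pos : 0 < ε₁ := by positivity
  obtain ⟨δ₂, hδ₂pos, hδ₂⟩ : ∃ δ₂ > 0, ∀ x : Fin N → ℝ, ‖x‖ < δ₂ →
      ‖y x - J x‖ ≤ ε₁ * ‖x‖ := by
    have := (Asymptotics.isLittleO_iff.mp hlo) hε₁pos
    rw [Metric.eventually_nhds_iff] at this
    obtain ⟨ε, hε, h⟩ := this
    exact ⟨ε, hε, fun x hx => by simpa using h (by simpa [dist_zero_right] using hx)⟩
  set B : ℝ := ‖J‖ + ε₁ with hB
  have hBpos : 0 < B := by positivity
  have hybd : ∀ x : Fin N → ℝ, ‖x‖ < δ₂ → ‖y x‖ ≤ B * ‖x‖ := by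
    intro x hx
    have h1 := hδ₂ x hx
    have h2 : ‖J x‖ ≤ ‖J‖ * ‖x‖ := J.le_opNorm x
    calc ‖y x‖ = ‖(y x - J x) + J x‖ := by ring_nf
    _ ≤ ‖y x - J x‖ + ‖J x‖ := norm_add_le _ _
    _ ≤ ε₁ * ‖x‖ + ‖J‖ * ‖x‖ := add_le_add h1 h2
    _ = B * ‖x‖ := by ring
  set εg : ℝ := c₀ / (4 * N * B) with hεg
  have hεgpos : 0 < εg := by positivity
  have hgc : ∀ i : Fin N, ∃ d > 0, ∀ t ∈ Set.Icc (0:ℝ) 1, dist t 0 < d →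
      dist (g i t) (g i 0) < εg := by
    intro i
    exact Metric.continuousWithinAt_iff.mp ((hgcont i) 0 ⟨le_refl 0, zero_le_one⟩) εg hεgpos
  choose dg hdgpos hdg using hgc
  set δ : ℝ := min (min δ₂ 1) (Finset.univ.inf' Finset.univ_nonempty dg) / 2 with hδdef
  have hinf : 0 < Finset.univ.inf' Finset.univ_nonempty dg := by
    rw [Finset.lt_inf'_iff]
    exact fun i _ => hdgpos i
  have hδpos : 0 < δ := by
    have h1 : 0 < min (min δ₂ 1) (Finset.univ.inf' Finset.univ_nonempty dg) := by
      apply lt_min (lt_min hδ₂pos one_pos) hinf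
    linarith
  refine ⟨δ, hδpos, fun x hx hxδ => ?_⟩
  have hxlt2 : ‖x‖ < δ₂ := by
    have : δ < δ₂ := by
      have := min_le_left (min δ₂ 1) (Finset.univ.inf' Finset.univ_nonempty dg)
      have := min_le_left δ₂ 1
      simp only [hδdef]; linarith
    linarith
  have hxcomp : ∀ i, |x i| ≤ ‖x‖ := fun i => by
    simpa using norm_le_pi_norm x i
  have hgclose : ∀ i, |g i (x i) - g i 0| ≤ εg := by
    intro i
    have hxi : x i ∈ Set.Icc (0:ℝ) 1 := ⟨hx.1 i, hx.2 i⟩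
    have hd : dist (x i) 0 < dg i := by
      rw [Real.dist_eq, sub_zero]
      have h1 : δ < dg i := by
        have h2 := min_le_right (min δ₂ 1) (Finset.univ.inf' Finset.univ_nonempty dg)
        have h3 : Finset.univ.inf' Finset.univ_nonempty dg ≤ dg i :=
          Finset.inf'_le dg (Finset.mem_univ i)
        simp only [hδdef]; linarith
      calc |x i| ≤ ‖x‖ := hxcomp i
      _ ≤ δ := hxδ
      _ < dg i := h1
    have := hdg i (x i) hxi hd
    rw [Real.dist_eq] at this
    linarith
  have hyc : ∀ i, |y x i| ≤ B * ‖x‖ := by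
    intro i
    calc |y x i| ≤ ‖y x‖ := by simpa using norm_le_pi_norm (y x) i
    _ ≤ B * ‖x‖ := hybd x hxlt2
  have hJc : ∀ i, |y x i - J x i| ≤ ε₁ * ‖x‖ := by
    intro i
    calc |y x i - J x i| = ‖(y x - J x) i‖ := by simp [Pi.sub_apply]
    _ ≤ ‖y x - J x‖ := norm_le_pi_norm _ i
    _ ≤ ε₁ * ‖x‖ := hδ₂ x hxlt2
  have hterm : ∀ i : Fin N, x i * ((g i (x i) - g i 0) * y x i + g i 0 * (y x i - J x i))
      ≤ c₀ / (2*N) * ‖x‖^2 := by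
    intro i
    have habs : |x i * ((g i (x i) - g i 0) * y x i + g i 0 * (y x i - J x i))|
        ≤ ‖x‖ * (εg * (B * ‖x‖) + GS * (ε₁ * ‖x‖)) := by
      rw [abs_mul]
      apply mul_le_mul (hxcomp i) ?_ (abs_nonneg _) (norm_nonneg x)
      calc |(g i (x i) - g i 0) * y x i + g i 0 * (y x i - J x i)|
          ≤ |(g i (x i) - g i 0) * y x i| + |g i 0 * (y x i - J x i)| := abs_add_le _ _
      _ = |g i (x i) - g i 0| * |y x i| + |g i 0| * |y x i - J x i| := by
          rw [abs_mul, abs_mul]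
      _ ≤ εg * (B * ‖x‖) + GS * (ε₁ * ‖x‖) := by
          apply add_le_add
          · exact mul_le_mul (hgclose i) (hyc i) (abs_nonneg _)
              hεgpos.le
          · refine mul_le_mul ?_ (hJc i) (abs_nonneg _) hGSpos.le
            rw [abs_of_nonneg (hg0nonneg i)]; exact hg0le i
    have heq : ‖x‖ * (εg * (B * ‖x‖) + GS * (ε₁ * ‖x‖)) = c₀/(2*N) * ‖x‖^2 := by
      have h1 : εg * B = c₀ / (4*N) := by
        rw [hεg]; field_simp [hBpos.ne']
      have h2 : GS * ε₁ = c₀ / (4*N) := by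
        rw [hε₁]; field_simp
      have : εg * (B * ‖x‖) + GS * (ε₁ * ‖x‖) = (εg * B + GS * ε₁) * ‖x‖ := by ring
      rw [this, h1, h2]
      field_simp
      ring
    calc x i * ((g i (x i) - g i 0) * y x i + g i 0 * (y x i - J x i))
        ≤ |x i * ((g i (x i) - g i 0) * y x i + g i 0 * (y x i - J x i))| := le_abs_self _
    _ ≤ ‖x‖ * (εg * (B * ‖x‖) + GS * (ε₁ * ‖x‖)) := habs
    _ = c₀/(2*N) * ‖x‖^2 := heq
  have hsplit : (∑ i, x i * g i (x i) * y x i)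
      = (∑ i, g i 0 * x i * J x i)
        + ∑ i, x i * ((g i (x i) - g i 0) * y x i + g i 0 * (y x i - J x i)) := by
    rw [← Finset.sum_add_distrib]
    apply Finset.sum_congr rfl
    intro i _
    ring
  have hsum2 : (∑ i, x i * ((g i (x i) - g i 0) * y x i + g i 0 * (y x i - J x i)))
      ≤ (c₀/2) * ‖x‖^2 := by
    calc (∑ i, x i * ((g i (x i) - g i 0) * y x i + g i 0 * (y x i - J x i)))
        ≤ ∑ _i : Fin N, c₀/(2*N) * ‖x‖^2 :=
          Finset.sum_le_sum fun i _ => hterm i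
    _ = N * (c₀/(2*N) * ‖x‖^2) := by
        rw [Finset.sum_const, Finset.card_univ, Fintype.card_fin, nsmul_eq_mul]
    _ = (c₀/2) * ‖x‖^2 := by
        field_simp
  calc (∑ i, x i * g i (x i) * y x i)
      = (∑ i, g i 0 * x i * J x i)
        + ∑ i, x i * ((g i (x i) - g i 0) * y x i + g i 0 * (y x i - J x i)) := hsplit
  _ ≤ -c₀ * ‖x‖^2 + (c₀/2) * ‖x‖^2 := add_le_add (hQ x) hsum2
  _ = -(c₀/2) * ‖x‖^2 := by ring

/-- Extinction of cooperation: for the dynamics `ṗ i = p i * g i (p i) * y i p` on the cube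
`[0,1]^N`, where `y` is continuously differentiable with `y 0 = 0` and Jacobian `J` at `0`,
and each `g i` is continuous and positive on `[0,1]`, negative definiteness of the weighted
quadratic form `x ↦ xᵀ diag(g 1 0, …, g N 0) J x` implies that the equilibrium `p* = 0` is
asymptotically stable relative to the cube. -/
theorem extinction_of_cooperation
    (N : ℕ) (y : (Fin N → ℝ) → Fin N → ℝ)
    (hy : ContDiff ℝ 1 y) (hy0 : y 0 = 0)
    (g : Fin N → ℝ → ℝ)
    (hgcont : ∀ i, ContinuousOn (g i) (Set.Icc (0 : ℝ) 1))
    (hgpos : ∀ i, ∀ x ∈ Set.Icc (0 : ℝ) 1, 0 < g i x)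
    (hneg : ∀ x : Fin N → ℝ, x ≠ 0 →
      ∑ i : Fin N, g i 0 * x i * fderiv ℝ y 0 x i < 0) :
    ∀ U ∈ 𝓝 (0 : Fin N → ℝ), ∃ V ∈ 𝓝 (0 : Fin N → ℝ),
      ∀ p : ℝ → Fin N → ℝ,
        (∀ t ∈ Set.Ici (0 : ℝ), p t ∈ Set.Icc (0 : Fin N → ℝ) 1) →
        (∀ i : Fin N, ∀ t ∈ Set.Ici (0 : ℝ),
          HasDerivWithinAt (fun s => p s i)
            (p t i * g i (p t i) * y (p t) i) (Set.Ici 0) t) →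
        p 0 ∈ V →
        (∀ t ∈ Set.Ici (0 : ℝ), p t ∈ U) ∧ Tendsto p atTop (𝓝 0) := by
  intro U hU
  rcases Nat.eq_zero_or_pos N with hN0 | hN
  · -- trivial case N = 0
    subst hN0
    refine ⟨U, hU, fun p _ _ _ => ?_⟩
    have hp : ∀ t, p t = 0 := fun t => funext fun i => i.elim0
    constructor
    · intro t _; rw [hp t]; exact mem_of_mem_nhds hU
    · have : p = fun _ => 0 := funext hp
      rw [this]; exact tendsto_const_nhds
  -- main case
  have hNR : (0:ℝ) < N := by exact_mod_cast hN
  set J := fderiv ℝ y 0 with hJdef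
  set Q : (Fin N → ℝ) → ℝ := fun x => ∑ i, g i 0 * x i * J x i with hQdef
  have hQc : Continuous Q := by
    apply continuous_finset_sum
    intro i _
    exact ((continuous_const.mul (continuous_apply i)).mul
      ((continuous_apply i).comp J.continuous))
  have hhom : ∀ (c : ℝ) x, Q (c • x) = c ^ 2 * Q x := by
    intro c x
    simp only [hQdef, Finset.mul_sum]
    apply Finset.sum_congr rfl
    intro i _
    rw [map_smul]
    simp only [Pi.smul_apply, smul_eq_mul]
    ring
  obtain ⟨c₀, hc₀, hQb⟩ := negdef_bound hN Q hQc hhom (fun x hx => hneg x hx)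
  obtain ⟨δ, hδpos, hF⟩ := main_estimate hN y hy hy0 g hgcont hgpos hc₀ hQb
  obtain ⟨εU, hεU, hball⟩ := Metric.mem_nhds_iff.mp hU
  set ρ : ℝ := min δ εU with hρdef
  have hρpos : 0 < ρ := lt_min hδpos hεU
  have hρδ : ρ ≤ δ := min_le_left _ _
  have hρεU : ρ ≤ εU := min_le_right _ _
  refine ⟨Metric.ball 0 (ρ / (N + 1)), Metric.ball_mem_nhds 0 (by positivity), ?_⟩
  intro p hmem hderiv h0
  set W : ℝ → ℝ := fun t => ∑ i, p t i with hWdef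
  set F : (Fin N → ℝ) → ℝ := fun x => ∑ i, x i * g i (x i) * y x i with hFdef
  have hWd : ∀ t ∈ Set.Ici (0:ℝ), HasDerivWithinAt W (F (p t)) (Set.Ici 0) t := by
    intro t ht
    exact HasDerivWithinAt.fun_sum fun i _ => hderiv i t ht
  have hWcont : ContinuousOn W (Set.Ici 0) := fun t ht => (hWd t ht).continuousWithinAt
  have hpnonneg : ∀ t ∈ Set.Ici (0:ℝ), ∀ i, 0 ≤ p t i := fun t ht i => (hmem t ht).1 i
  have hWnonneg : ∀ t ∈ Set.Ici (0:ℝ), 0 ≤ W t := fun t ht =>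
    Finset.sum_nonneg fun i _ => hpnonneg t ht i
  have hnormW : ∀ t ∈ Set.Ici (0:ℝ), ‖p t‖ ≤ W t := by
    intro t ht
    rw [pi_norm_le_iff_of_nonneg (hWnonneg t ht)]
    intro i
    rw [Real.norm_eq_abs, abs_of_nonneg (hpnonneg t ht i)]
    exact Finset.single_le_sum (fun j _ => hpnonneg t ht j) (Finset.mem_univ i)
  have hWleN : ∀ t ∈ Set.Ici (0:ℝ), W t ≤ N * ‖p t‖ := by
    intro t ht
    calc W t ≤ ∑ _i : Fin N, ‖p t‖ := Finset.sum_le_sum fun i _ => by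
          calc p t i ≤ |p t i| := le_abs_self _
          _ ≤ ‖p t‖ := by simpa using norm_le_pi_norm (p t) i
    _ = N * ‖p t‖ := by
        rw [Finset.sum_const, Finset.card_univ, Fintype.card_fin, nsmul_eq_mul]
  have hFle : ∀ t, t ∈ Set.Ici (0:ℝ) → W t ≤ δ → F (p t) ≤ -(c₀/2) * ‖p t‖^2 :=
    fun t ht h => hF (p t) (hmem t ht) ((hnormW t ht).trans h)
  have hFle0 : ∀ t, t ∈ Set.Ici (0:ℝ) → W t ≤ δ → F (p t) ≤ 0 := by
    intro t ht h
    have := hFle t ht h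
    nlinarith [norm_nonneg (p t)]
  have hW0 : W 0 < ρ := by
    have h1 : ‖p 0‖ < ρ / (N + 1) := by
      rw [← dist_zero_right]; exact h0
    have h2 := hWleN 0 (Set.mem_Ici.mpr (le_refl 0))
    have h3 : (N:ℝ) * (ρ / (N+1)) < ρ := by
      rw [mul_div_assoc', div_lt_iff₀ (by positivity : (0:ℝ) < (N:ℝ)+1)]
      nlinarith
    nlinarith
  -- Claim A: W stays below ρ
  have claimA : ∀ t ∈ Set.Ici (0:ℝ), W t < ρ := by
    by_contra hcon
    push_neg at hcon
    obtain ⟨t₁, ht₁, hWt₁⟩ := hcon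
    set S := {t ∈ Set.Icc (0:ℝ) t₁ | ρ ≤ W t} with hSdef
    have hSne : S.Nonempty := ⟨t₁, ⟨⟨ht₁, le_refl t₁⟩, hWt₁⟩⟩
    have hScl : IsClosed S := by
      have : S = Set.Icc 0 t₁ ∩ W ⁻¹' Set.Ici ρ := by
        ext s; simp [hSdef, Set.mem_sep_iff, and_comm]
      rw [this]
      exact (hWcont.mono (Set.Icc_subset_Ici_self)).preimage_isClosed_of_isClosed
        isClosed_Icc isClosed_Ici
    have hSbdd : BddBelow S := ⟨0, fun s hs => hs.1.1⟩
    set T := sInf S with hTdef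
    have hTS : T ∈ S := hScl.csInf_mem hSne hSbdd
    have hT0 : 0 < T := by
      rcases hTS.1.1.lt_or_eq with h | h
      · exact h
      · exfalso; rw [← h] at hTS; linarith [hTS.2]
    have hlt : ∀ s, 0 ≤ s → s < T → W s < ρ := by
      intro s hs0 hsT
      by_contra h
      push_neg at h
      have hsS : s ∈ S := ⟨⟨hs0, hsT.le.trans hTS.1.2⟩, h⟩
      exact absurd (csInf_le hSbdd hsS) (not_le.mpr hsT)
    have hanti : AntitoneOn W (Set.Icc 0 T) := by
      apply antitoneOn_of_hasDerivWithinAt_nonpos (f' := fun s => F (p s))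
        (convex_Icc 0 T) (hWcont.mono (Set.Icc_subset_Ici_self))
      · intro s hs
        rw [interior_Icc] at hs
        exact ((hWd s (Set.mem_Ici.mpr hs.1.le)).hasDerivAt
          (Ici_mem_nhds hs.1)).hasDerivWithinAt
      · intro s hs
        rw [interior_Icc] at hs
        have hWs : W s < ρ := hlt s hs.1.le hs.2
        exact hFle0 s (Set.mem_Ici.mpr hs.1.le) (le_trans hWs.le hρδ)
    have := hanti (Set.left_mem_Icc.mpr hT0.le) ⟨hT0.le, le_refl T⟩ hT0.le
    linarith [hTS.2]
  -- global antitonicity on Ici 0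
  have hantiIci : AntitoneOn W (Set.Ici 0) := by
    apply antitoneOn_of_hasDerivWithinAt_nonpos (f' := fun s => F (p s))
      (convex_Ici 0) hWcont
    · intro s hs
      rw [interior_Ici] at hs
      exact ((hWd s (Set.mem_Ici.mpr hs.le)).hasDerivAt
        (Ici_mem_nhds hs)).hasDerivWithinAt
    · intro s hs
      rw [interior_Ici] at hs
      exact hFle0 s (Set.mem_Ici.mpr hs.le)
        (le_trans (claimA s (Set.mem_Ici.mpr hs.le)).le hρδ)
  constructor
  · -- stability
    intro t ht
    apply hball
    rw [Metric.mem_ball, dist_zero_right]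
    exact lt_of_le_of_lt (hnormW t ht) (lt_of_lt_of_le (claimA t ht) hρεU)
  · -- convergence
    set f : ℝ → ℝ := fun t => W (max t 0) with hfdef
    have hf_anti : Antitone f := by
      intro a b hab
      exact hantiIci (le_max_right a 0) (le_max_right b 0) (max_le_max hab (le_refl 0))
    have hfbdd : BddBelow (Set.range f) := by
      refine ⟨0, fun z hz => ?_⟩
      obtain ⟨t, rfl⟩ := hz
      exact hWnonneg _ (le_max_right t 0)
    have htend : Tendsto f atTop (𝓝 (⨅ t, f t)) := tendsto_atTop_ciInf hf_anti hfbdd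
    have hL0 : 0 ≤ ⨅ t, f t := le_ciInf fun t => hWnonneg _ (le_max_right t 0)
    have hLzero : (⨅ t, f t) = 0 := by
      by_contra hne
      have hL : 0 < ⨅ t, f t := lt_of_le_of_ne hL0 (Ne.symm hne)
      set L := ⨅ t, f t with hLdef
      have hfL : ∀ t ∈ Set.Ici (0:ℝ), L ≤ W t := by
        intro t ht
        have h := ciInf_le hfbdd t
        have heq : f t = W t := by show W (max t 0) = W t; rw [max_eq_left ht]
        rw [hLdef]
        calc (⨅ t, f t) ≤ f t := h
        _ = W t := heq
      set m : ℝ := (c₀/2) * (L/N)^2 with hmdef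
      have hmpos : 0 < m := by positivity
      have hFm : ∀ t ∈ Set.Ici (0:ℝ), F (p t) ≤ -m := by
        intro t ht
        have h1 : L / N ≤ ‖p t‖ := by
          have h2 := hWleN t ht
          have h3 := hfL t ht
          rw [div_le_iff₀ hNR]
          nlinarith
        have h4 := hFle t ht (le_trans (claimA t ht).le hρδ)
        have h5 : (L/N)^2 ≤ ‖p t‖^2 := by
          apply sq_le_sq' _ h1
          have : 0 < L / N := by positivity
          linarith [norm_nonneg (p t)]
        nlinarith
      set V2 : ℝ → ℝ := fun t => W t + m * t with hV2def
      have hV2anti : AntitoneOn V2 (Set.Ici 0) := by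
        apply antitoneOn_of_hasDerivWithinAt_nonpos (f' := fun s => F (p s) + m)
          (convex_Ici 0)
        · intro s hs
          exact (hWcont s hs).add ((continuous_const.mul continuous_id).continuousWithinAt)
        · intro s hs
          rw [interior_Ici] at hs
          have h1 := (hWd s (Set.mem_Ici.mpr hs.le)).hasDerivAt (Ici_mem_nhds hs)
          have h2 : HasDerivAt (fun t : ℝ => m * t) m s := by
            simpa using (hasDerivAt_id s).const_mul m
          exact (h1.add h2).hasDerivWithinAt
        · intro s hs
          rw [interior_Ici] at hs
          have := hFm s (Set.mem_Ici.mpr hs.le)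
          linarith
      set t₂ : ℝ := (W 0 + 1) / m with ht₂def
      have ht₂0 : 0 ≤ t₂ := by
        have := hWnonneg 0 (Set.mem_Ici.mpr (le_refl 0))
        positivity
      have := hV2anti (Set.mem_Ici.mpr (le_refl 0)) (Set.mem_Ici.mpr ht₂0) ht₂0
      have hV2le : W t₂ + m * t₂ ≤ W 0 + m * 0 := by simpa [hV2def] using this
      have hmt₂ : m * t₂ = W 0 + 1 := by
        rw [ht₂def]; field_simp
      have hWt₂ := hWnonneg t₂ (Set.mem_Ici.mpr ht₂0)
      nlinarith
    rw [tendsto_zero_iff_norm_tendsto_zero]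
    have hfin : ∀ᶠ t in atTop, ‖p t‖ ≤ f t := by
      filter_upwards [eventually_ge_atTop (0:ℝ)] with t ht
      have heq : f t = W t := by show W (max t 0) = W t; rw [max_eq_left ht]
      rw [heq]; exact hnormW t ht
    exact squeeze_zero' (Eventually.of_forall fun t => norm_nonneg _) hfin
      (hLzero ▸ htend)
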